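/- If f ∈ F[x,y] has multiplicity at least m at the point (α, v), and f = g·(y - h)^d + f₁ where g ∈ F[x], h ∈ F[x] satisfies h(α) = v, d is the y-degree of f, and y-deg(f₁) < d, then (x - α)^{m-d} divides g (assuming d ≤ m). -/
import Mathlib


open Polynomial

/-- `f(x+a, y+b)`: shift of a bivariate polynomial `f ∈ F[x][y]` by the point `(a,b)`. -/
noncomputable def shiftXY (F : Type*) [Field F] (f : Polynomial (Polynomial F)) (a b : F) :
    Polynomial (Polynomial F) :=
  Polynomial.eval₂
    ((Polynomial.C : Polynomial F →+* Polynomial (Polynomial F)).comp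
      (Polynomial.aeval (Polynomial.X + Polynomial.C a)).toRingHom)
    (Polynomial.X + Polynomial.C (Polynomial.C b)) f

/-- `f` has multiplicity at least `m` at the point `(a,b)`. -/
def multGE (F : Type*) [Field F] (f : Polynomial (Polynomial F)) (a b : F) (m : ℕ) : Prop :=
  ∀ i j : ℕ, i + j < m → ((shiftXY F f a b).coeff j).coeff i = 0

/-- If `f ≠ 0` has multiplicity `≥ m` at `(α, v)`, `h(α) = v`, and
`f = g·(y-h)^d + f₁` with `d = y-deg(f) ≤ m`, `g ∈ F[x]`, `y-deg(f₁) < d`,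
then `(x - α)^{m-d}` divides `g`. -/
theorem stmt7 {F : Type*} [Field F] (m : ℕ) (α v : F)
    (f : Polynomial (Polynomial F)) (hf : f ≠ 0) (hdm : f.natDegree ≤ m)
    (hmult : multGE F f α v m)
    (h : F[X]) (hh : h.eval α = v)
    (g : F[X]) (f₁ : Polynomial (Polynomial F))
    (hsplit : f = Polynomial.C g * (X - Polynomial.C h) ^ f.natDegree + f₁)
    (hf₁ : f₁.degree < (f.natDegree : WithBot ℕ)) :
    (X - C α) ^ (m - f.natDegree) ∣ g := by
  set d := f.natDegree with hd
  set τ : F[X] →ₐ[F] F[X] := aeval (X + C α) with hτ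
  set σ : F[X] →ₐ[F] F[X] := aeval (X - C α) with hσ
  have hστ : ∀ p : F[X], σ (τ p) = p := by
    intro p
    have hcomp : σ.comp τ = AlgHom.id F F[X] := by
      apply Polynomial.algHom_ext
      simp [τ, σ]
    calc σ (τ p) = (σ.comp τ) p := rfl
      _ = p := by rw [hcomp]; rfl
  have hτinj : Function.Injective τ := Function.LeftInverse.injective hστ
  -- f.coeff d = g
  have hmono : ((X - Polynomial.C h : Polynomial (Polynomial F)) ^ d).coeff d = 1 := by
    have hm : ((X - Polynomial.C h : Polynomial (Polynomial F)) ^ d).Monic :=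
      (monic_X_sub_C h).pow d
    have hdeg : ((X - Polynomial.C h : Polynomial (Polynomial F)) ^ d).natDegree = d := by
      rw [natDegree_pow, natDegree_X_sub_C, mul_one]
    have := hm.coeff_natDegree
    rwa [hdeg] at this
  have hfd : f.coeff d = g := by
    conv_lhs => rw [hsplit]
    rw [coeff_add, coeff_C_mul, hmono,
      coeff_eq_zero_of_degree_lt hf₁, mul_one, add_zero]
  -- rewrite shiftXY as a comp of a map
  have hshift : shiftXY F f α v
      = (f.map τ.toRingHom).comp (X + Polynomial.C (Polynomial.C v)) := by
    rw [shiftXY, Polynomial.comp, eval₂_map]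
  -- coefficient d of the shift is τ g
  have hpd : (f.map τ.toRingHom).natDegree = d := natDegree_map_eq_of_injective hτinj f
  have hcoeffd : (shiftXY F f α v).coeff d = τ g := by
    rw [hshift]
    have hq : (X + Polynomial.C (Polynomial.C v) : Polynomial (Polynomial F)).natDegree ≠ 0 := by
      simp [natDegree_X_add_C]
    have hdcomp :
        ((f.map τ.toRingHom).comp (X + Polynomial.C (Polynomial.C v))).natDegree = d := by
      rw [natDegree_comp, hpd, natDegree_X_add_C, mul_one]
    have hlc :
        ((f.map τ.toRingHom).comp (X + Polynomial.C (Polynomial.C v))).coeff d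
          = ((f.map τ.toRingHom).comp (X + Polynomial.C (Polynomial.C v))).leadingCoeff := by
      rw [leadingCoeff, hdcomp]
    rw [hlc, leadingCoeff_comp hq, (monic_X_add_C _).leadingCoeff, one_pow, mul_one,
      leadingCoeff, hpd, coeff_map, hfd]
    rfl
  -- divisibility
  have hk : X ^ (m - d) ∣ τ g := by
    rw [X_pow_dvd_iff]
    intro i hi
    have := hmult i d (by omega)
    rwa [hcoeffd] at this
  have hmap := map_dvd σ hk
  rw [map_pow, hστ g] at hmap
  simpa [σ] using hmap
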